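/- Let M and N be monoids and let f : M →* N be a monoid homomorphism, inducing a functor F : SingleObj M ⥤ SingleObj N between the corresponding one-object categories. Then delta lens structures on F are in bijective correspondence with monoid homomorphisms s : N →* M satisfying f ∘ s = id_N; explicitly, a lifting φ makes (F, φ) a delta lens if and only if the function n ↦ φ(⋆, n) is a monoid homomorphism N →* M that is a right inverse of f. -/

import Mathlib

open CategoryTheory

/-- A delta lens `(f, φ) : A ⇄ B`. -/
structure DeltaLens (A B : Type*) [Category A] [Category B] where
  f : A ⥤ B
  p : ∀ (a : A) (b : B), (f.obj a ⟶ b) → A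
  lift : ∀ (a : A) (b : B) (u : f.obj a ⟶ b), a ⟶ p a b u
  f_p : ∀ (a : A) (b : B) (u : f.obj a ⟶ b), f.obj (p a b u) = b
  f_lift : ∀ (a : A) (b : B) (u : f.obj a ⟶ b), f.map (lift a b u) ≫ eqToHom (f_p a b u) = u
  p_id : ∀ a : A, p a (f.obj a) (𝟙 (f.obj a)) = a
  lift_id : ∀ a : A, lift a (f.obj a) (𝟙 (f.obj a)) ≫ eqToHom (p_id a) = 𝟙 a
  p_comp : ∀ (a : A) (b b' : B) (u : f.obj a ⟶ b) (v : b ⟶ b'),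
    p a b' (u ≫ v) = p (p a b u) b' (eqToHom (f_p a b u) ≫ v)
  lift_comp : ∀ (a : A) (b b' : B) (u : f.obj a ⟶ b) (v : b ⟶ b'),
    lift a b' (u ≫ v) ≫ eqToHom (p_comp a b b' u v) =
      lift a b u ≫ lift (p a b u) b' (eqToHom (f_p a b u) ≫ v)

open SingleObj

section Aux

variable {M N : Type*} [Monoid M] [Monoid N] (f : M →* N)

/-- Build a delta lens from a section. -/
def mkLens (s : N →* M) (hs : f.comp s = MonoidHom.id N) :
    DeltaLens (SingleObj M) (SingleObj N) where
  f := f.toFunctor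
  p _ _ _ := star M
  lift _ _ u := s u
  f_p _ _ _ := rfl
  f_lift _ _ u := show (1 : N) * f (s u) = u by
    rw [one_mul]; exact DFunLike.congr_fun hs u
  p_id _ := rfl
  lift_id a := show (1 : M) * s 1 = 1 by simp
  p_comp _ _ _ _ _ := rfl
  lift_comp a b b' u v := show (1 : M) * s (v * u) = s (v * (1:N)) * s u by simp

/-- The section extracted from a delta lens. -/
def lensSec (L : DeltaLens (SingleObj M) (SingleObj N)) : N →* M where
  toFun n := L.lift (star M) (star N) n
  map_one' := by
    have h : (1 : M) * L.lift (star M) (star N) (1 : N) = 1 := L.lift_id (star M)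
    simpa using h
  map_mul' x y := by
    have h : (1 : M) * L.lift (star M) (star N) (x * y) =
        L.lift (star M) (star N) (x * (1:N)) * L.lift (star M) (star N) y :=
      L.lift_comp (star M) (star N) (star N) y x
    have h2 : (L.lift (star M) (star N) (x * (1:N)) : M) = L.lift (star M) (star N) x :=
      congrArg (fun w => (L.lift (star M) (star N) w : M)) (mul_one x)
    rw [one_mul, h2] at h
    exact h

theorem lensSec_section (L : DeltaLens (SingleObj M) (SingleObj N))
    (hL : L.f = f.toFunctor) : f.comp (lensSec L) = MonoidHom.id N := by
  ext n
  have h : (1 : N) * L.f.map (X := star M) (Y := star M) (L.lift (star M) (star N) n) = n :=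
    L.f_lift (star M) (star N) n
  rw [hL] at h
  simp at h
  exact h

theorem lens_ext {L₁ L₂ : DeltaLens (SingleObj M) (SingleObj N)}
    (hf : L₁.f = L₂.f)
    (hl : ∀ u : N, (L₁.lift (star M) (star N) u : M) = L₂.lift (star M) (star N) u) :
    L₁ = L₂ := by
  obtain ⟨F₁, p₁, l₁, _, _, _, _, _, _⟩ := L₁
  obtain ⟨F₂, p₂, l₂, _, _, _, _, _, _⟩ := L₂
  dsimp at hf hl
  subst hf
  have hp : p₁ = p₂ := by
    funext a b u; exact Subsingleton.elim _ _
  subst hp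
  have : l₁ = l₂ := by
    funext a b u; exact hl u
  subst this
  rfl

end Aux

theorem singleObj_deltaLens_iff {M N : Type*} [Monoid M] [Monoid N] (f : M →* N) :
    (∀ φ : N → M,
      (∃ L : DeltaLens (SingleObj M) (SingleObj N),
          L.f = f.toFunctor ∧
          ∀ u : N, L.lift (SingleObj.star M) (SingleObj.star N) u = φ u) ↔
      (∃ s : N →* M, (∀ n : N, s n = φ n) ∧ f.comp s = MonoidHom.id N)) ∧
    Nonempty
      ({L : DeltaLens (SingleObj M) (SingleObj N) // L.f = f.toFunctor} ≃
        {s : N →* M // f.comp s = MonoidHom.id N}) := by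
  constructor
  · intro φ
    constructor
    · rintro ⟨L, hL, hφ⟩
      exact ⟨lensSec L, fun n => hφ n, lensSec_section f L hL⟩
    · rintro ⟨s, hsφ, hs⟩
      exact ⟨mkLens f s hs, rfl, fun u => hsφ u⟩
  · exact ⟨{
      toFun := fun L => ⟨lensSec L.1, lensSec_section f L.1 L.2⟩
      invFun := fun s => ⟨mkLens f s.1 s.2, rfl⟩
      left_inv := fun L => Subtype.ext <| lens_ext (L.2.symm) (fun u => rfl)
      right_inv := fun s => Subtype.ext <| MonoidHom.ext fun n => rfl }⟩
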